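/- Let a_1 < a_2 be positive integers and let e_1, e_2 be positive integers. If the Young diagram Y(a;e) with e_1 rows of length a_1 and e_2 rows of length a_2 is wide, then Y(a;e) is Latin. -/

import Mathlib

/-- The multiset of row lengths of the Young diagram `Y(a;e)`:
`e i` rows of length `a i` for `i = 1, ..., p`. -/
def rowMultiset (p : ℕ) (a e : ℕ → ℕ) : Multiset ℕ :=
  ∑ i ∈ Finset.Icc 1 p, Multiset.replicate (e i) (a i)

/-- The sum of the `w` largest elements of the multiset `S`
(the sum of all of `S` if `S` has at most `w` elements). -/
def topSum (S : Multiset ℕ) (w : ℕ) : ℕ :=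
  ((Multiset.sort S (· ≤ ·)).reverse.take w).sum

/-- The sum of the lengths of the leftmost `w` columns of the Young diagram
whose multiset of row lengths is `S`. -/
def colSum (S : Multiset ℕ) (w : ℕ) : ℕ :=
  ∑ c ∈ Finset.Icc 1 w, (S.filter (fun r => c ≤ r)).card

/-- A Young diagram with multiset of row lengths `R` is wide if every subdiagram formed
by a subset of the rows dominates its conjugate. -/
def Wide (R : Multiset ℕ) : Prop :=
  ∀ S : Multiset ℕ, S ≤ R → ∀ w : ℕ, 0 < w → colSum S w ≤ topSum S w

/-- A Young diagram with multiset of row lengths `R` is Latin if, listing its row lengths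
as `l 1, ..., l m`, there is a filling `f` of its cells such that row `i` is filled by a
permutation of `1, ..., l i` and the entries in each column are pairwise distinct. -/
def IsLatin (R : Multiset ℕ) : Prop :=
  ∃ (m : ℕ) (l : ℕ → ℕ) (f : ℕ → ℕ → ℕ),
    (Finset.Icc 1 m).val.map l = R ∧
    (∀ i ∈ Finset.Icc 1 m,
      Set.InjOn (f i) (Set.Icc 1 (l i)) ∧
      (Finset.Icc 1 (l i)).image (f i) = Finset.Icc 1 (l i)) ∧
    (∀ j, 1 ≤ j → ∀ i₁ ∈ Finset.Icc 1 m, ∀ i₂ ∈ Finset.Icc 1 m,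
      j ≤ l i₁ → j ≤ l i₂ → f i₁ j = f i₂ j → i₁ = i₂)

/-- An allocation for the Young diagram `Y(a;e)` with `p` row blocks (where `a 0 = 0`
and `b i = a i - a (i-1)`). -/
def HasAllocation (p : ℕ) (a e : ℕ → ℕ) : Prop :=
  ∃ z : ℕ → ℕ → ℕ → ℕ,
    (∀ i j, 1 ≤ j → j ≤ i → i ≤ p →
      ∑ k ∈ Finset.Icc 1 i, z i j k = e i * (a j - a (j - 1))) ∧
    (∀ i k, 1 ≤ k → k ≤ i → i ≤ p →
      ∑ j ∈ Finset.Icc 1 i, z i j k = e i * (a k - a (k - 1))) ∧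
    (∀ j k, 1 ≤ j → j ≤ p → 1 ≤ k → k ≤ p →
      ∑ i ∈ Finset.Icc (max j k) p, z i j k ≤ (a j - a (j - 1)) * (a k - a (k - 1)))

/-- `sc a e j k`: the sum of the lengths of the leftmost `a j` columns of the tail
subdiagram `Y_k`. -/
def sc (a e : ℕ → ℕ) (j k : ℕ) : ℕ :=
  ∑ i ∈ Finset.Icc 1 k, e i * min (a i) (a j)

/-- `sr a e j k`: the sum of the lengths of the top `a j` rows of the tail
subdiagram `Y_k`. -/
def sr (a e : ℕ → ℕ) (j k : ℕ) : ℕ :=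
  topSum (rowMultiset k a e) (a j)

/-- `se e m k = ∑_{t=m}^{k} e t`. -/
def se (e : ℕ → ℕ) (m k : ℕ) : ℕ :=
  ∑ t ∈ Finset.Icc m k, e t

namespace WideTwoAux

open Finset

/-- prefix sums of `h` over `Icc 1 (v-1)` -/
def pf (h : ℕ → ℕ) (v : ℕ) : ℕ := ∑ x ∈ Finset.Icc 1 (v - 1), h x

lemma pf_one (h : ℕ → ℕ) : pf h 1 = 0 := by simp [pf]

lemma pf_succ (h : ℕ → ℕ) (v : ℕ) (hv : 1 ≤ v) : pf h (v + 1) = pf h v + h v := by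
  unfold pf
  have h1 : v + 1 - 1 = (v - 1) + 1 := by omega
  rw [h1, sum_Icc_succ_top (by omega)]
  congr 2
  omega

lemma pf_mono (h : ℕ → ℕ) : Monotone (pf h) := by
  intro x y hxy
  exact Finset.sum_le_sum_of_subset (Finset.Icc_subset_Icc_right (by omega))

/-- the intervals `[pf h v, pf h (v+1))`, `v = 1..N`, partition `[0, pf h (N+1))`:
counting version. -/
lemma sum_card_slice (h : ℕ → ℕ) :
    ∀ (N : ℕ) (S : Finset ℕ), (∀ p ∈ S, p < pf h (N + 1)) →
      ∑ v ∈ Finset.Icc 1 N,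
        ((Finset.Ico (pf h v) (pf h (v + 1))).filter (· ∈ S)).card = S.card := by
  intro N
  induction N with
  | zero =>
      intro S hS
      have : S = ∅ := by
        apply Finset.eq_empty_of_forall_notMem
        intro p hp
        have := hS p hp
        rw [pf_one] at this
        omega
      simp [this]
  | succ N ihN =>
      intro S hS
      rw [sum_Icc_succ_top (by omega)]
      set S₁ := S.filter (fun p => p < pf h (N + 1)) with hS₁
      set S₂ := S.filter (fun p => ¬ p < pf h (N + 1)) with hS₂
      have hsplit : S₁.card + S₂.card = S.card :=
        Finset.card_filter_add_card_filter_not _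
      have hterm : ∀ v ∈ Finset.Icc 1 N,
          ((Finset.Ico (pf h v) (pf h (v + 1))).filter (· ∈ S)).card
          = ((Finset.Ico (pf h v) (pf h (v + 1))).filter (· ∈ S₁)).card := by
        intro v hv
        congr 1
        apply Finset.filter_congr
        intro p hp
        rw [Finset.mem_Ico] at hp
        have hmono : pf h (v + 1) ≤ pf h (N + 1) := pf_mono h (by rw [Finset.mem_Icc] at hv; omega)
        simp only [hS₁, Finset.mem_filter, eq_iff_iff]
        constructor
        · intro hpS; exact ⟨hpS, by omega⟩
        · intro hpS; exact hpS.1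
      rw [Finset.sum_congr rfl hterm, ihN S₁ (by intro p hp; rw [hS₁, Finset.mem_filter] at hp; exact hp.2)]
      have hlast : ((Finset.Ico (pf h (N + 1)) (pf h (N + 2))).filter (· ∈ S)) = S₂ := by
        ext p
        simp only [Finset.mem_filter, Finset.mem_Ico, hS₂]
        constructor
        · rintro ⟨⟨h1, h2⟩, h3⟩; exact ⟨h3, by omega⟩
        · rintro ⟨h1, h2⟩
          exact ⟨⟨by omega, hS p h1⟩, h1⟩
      rw [hlast]
      omega

/-- water-filling sum identity -/
lemma waterfill (h : ℕ → ℕ) (R : ℕ) :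
    ∀ N, ∑ v ∈ Finset.Icc 1 N, min (h v) (R - pf h v) = min R (pf h (N + 1)) := by
  intro N
  induction N with
  | zero => simp [pf_one]
  | succ N ihN =>
      rw [sum_Icc_succ_top (by omega), ihN, pf_succ h (N + 1) (by omega)]
      omega

/-- existence of counts between bounds with prescribed total -/
lemma exists_cnt (N A T : ℕ) (lb : ℕ → ℕ)
    (hlb : ∀ v ∈ Finset.Icc 1 N, lb v ≤ A)
    (h1 : ∑ v ∈ Finset.Icc 1 N, lb v ≤ T) (h2 : T ≤ N * A) :
    ∃ cnt : ℕ → ℕ, (∀ v ∈ Finset.Icc 1 N, lb v ≤ cnt v ∧ cnt v ≤ A) ∧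
      ∑ v ∈ Finset.Icc 1 N, cnt v = T := by
  set h : ℕ → ℕ := fun v => A - lb v with hh
  set R := T - ∑ v ∈ Finset.Icc 1 N, lb v with hR
  refine ⟨fun v => lb v + min (h v) (R - pf h v), ?_, ?_⟩
  · intro v hv
    have h4 := hlb v hv
    have h3 : min (h v) (R - pf h v) ≤ h v := min_le_left _ _
    have h5 : h v = A - lb v := rfl
    constructor
    · exact Nat.le_add_right _ _
    · show lb v + min (h v) (R - pf h v) ≤ A
      omega
  · rw [Finset.sum_add_distrib, waterfill h R N]
    have hsum : pf h (N + 1) + ∑ v ∈ Finset.Icc 1 N, lb v = N * A := by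
      unfold pf
      have : (N + 1 - 1) = N := by omega
      rw [this, ← Finset.sum_add_distrib]
      have : ∀ v ∈ Finset.Icc 1 N, h v + lb v = A := by
        intro v hv; have := hlb v hv; simp only [hh]; omega
      rw [Finset.sum_congr rfl this, Finset.sum_const, Nat.card_Icc, smul_eq_mul,
        Nat.add_sub_cancel]
    omega



lemma mod_eq_of_close {t p q : ℕ} (ht : 0 < t) (hpq : p ≤ q) (hq : q < p + t)
    (h : p % t = q % t) : p = q := by
  have h1 := Nat.div_add_mod p t
  have h2 := Nat.div_add_mod q t
  have h3 : p / t ≤ q / t := Nat.div_le_div_right hpq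
  have h4 : q / t ≤ p / t := by
    by_contra hc
    push_neg at hc
    have h5 : p / t + 1 ≤ q / t := hc
    have h6 : t * (p / t + 1) ≤ t * (q / t) := Nat.mul_le_mul_left t h5
    have h7 : t * (p / t + 1) = t * (p / t) + t := by ring
    omega
  have h8 : p / t = q / t := le_antisymm h3 h4
  rw [h8, h] at h1
  omega

lemma card_filter_mod_le_one {t i a b : ℕ} (ht : 0 < t) (hlen : b ≤ a + t) :
    ((Finset.Ico a b).filter (fun p => p % t = i)).card ≤ 1 := by
  apply Finset.card_le_one.mpr
  intro p hp q hq
  simp only [Finset.mem_filter, Finset.mem_Ico] at hp hq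
  rcases le_total p q with hle | hle
  · exact mod_eq_of_close ht hle (by omega) (by omega)
  · exact (mod_eq_of_close ht hle (by omega) (by omega)).symm

def Lrow (t : ℕ) (cnt : ℕ → ℕ) (N : ℕ) (i : ℕ) : Finset ℕ :=
  (Finset.Icc 1 N).filter
    (fun v => ((Finset.Ico (pf cnt v) (pf cnt (v + 1))).filter (fun p => p % t = i)).Nonempty)

lemma Lrow_subset (t : ℕ) (cnt : ℕ → ℕ) (N i : ℕ) : Lrow t cnt N i ⊆ Finset.Icc 1 N :=
  Finset.filter_subset _ _

lemma Lrow_card (t d N : ℕ) (cnt : ℕ → ℕ) (ht : 0 < t)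
    (hc : ∀ v ∈ Finset.Icc 1 N, cnt v ≤ t)
    (hs : ∑ v ∈ Finset.Icc 1 N, cnt v = t * d) {i : ℕ} (hi : i < t) :
    (Lrow t cnt N i).card = d := by
  have hpfN : pf cnt (N + 1) = t * d := by
    unfold pf; rw [Nat.add_sub_cancel]; exact hs
  set Pi := (Finset.Ico 0 (t * d)).filter (fun p => p % t = i) with hPidef
  have hPi_card : Pi.card = d := by
    have himg : Pi = (Finset.range d).image (fun q => t * q + i) := by
      ext p
      simp only [hPidef, Finset.mem_filter, Finset.mem_Ico, Finset.mem_image, Finset.mem_range]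
      constructor
      · rintro ⟨⟨-, hlt⟩, hmod⟩
        refine ⟨p / t, ?_, ?_⟩
        · rw [Nat.div_lt_iff_lt_mul ht]
          have : d * t = t * d := mul_comm d t
          omega
        · have h0 := Nat.div_add_mod p t
          rw [hmod] at h0
          omega
      · rintro ⟨q, hq, rfl⟩
        refine ⟨⟨Nat.zero_le _, ?_⟩, ?_⟩
        · have h2 : t * (q + 1) ≤ t * d := Nat.mul_le_mul_left t hq
          have h3 : t * (q + 1) = t * q + t := by ring
          omega
        · rw [Nat.mul_add_mod]
          exact Nat.mod_eq_of_lt hi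
    rw [himg, Finset.card_image_of_injective _ ?_, Finset.card_range]
    intro q1 q2 hq
    simp only at hq
    exact Nat.eq_of_mul_eq_mul_left ht (by omega)
  have key : ∀ v ∈ Finset.Icc 1 N,
      ((Finset.Ico (pf cnt v) (pf cnt (v + 1))).filter (fun p => p % t = i))
      = ((Finset.Ico (pf cnt v) (pf cnt (v + 1))).filter (· ∈ Pi)) := by
    intro v hv
    apply Finset.filter_congr
    intro p hp
    rw [Finset.mem_Ico] at hp
    rw [Finset.mem_Icc] at hv
    have hub : pf cnt (v + 1) ≤ t * d := hpfN ▸ pf_mono cnt (by omega)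
    simp only [hPidef, Finset.mem_filter, Finset.mem_Ico, eq_iff_iff]
    constructor
    · intro hm; exact ⟨⟨Nat.zero_le _, by omega⟩, hm⟩
    · intro hm; exact hm.2
  have hcard : (Lrow t cnt N i).card
      = ∑ v ∈ Finset.Icc 1 N,
          ((Finset.Ico (pf cnt v) (pf cnt (v + 1))).filter (fun p => p % t = i)).card := by
    rw [Lrow, Finset.card_filter]
    apply Finset.sum_congr rfl
    intro v hv
    rw [Finset.mem_Icc] at hv
    have hlen : pf cnt (v + 1) ≤ pf cnt v + t := by
      rw [pf_succ cnt v (by omega)]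
      have := hc v (by rw [Finset.mem_Icc]; omega)
      omega
    have hle1 := card_filter_mod_le_one (t := t) (i := i)
      (a := pf cnt v) (b := pf cnt (v + 1)) ht hlen
    split_ifs with hne
    · have := Finset.card_pos.mpr hne
      omega
    · rw [Finset.not_nonempty_iff_eq_empty] at hne
      rw [hne]
      simp
  rw [hcard]
  have h2 : ∑ v ∈ Finset.Icc 1 N,
        ((Finset.Ico (pf cnt v) (pf cnt (v + 1))).filter (fun p => p % t = i)).card
      = ∑ v ∈ Finset.Icc 1 N,
        ((Finset.Ico (pf cnt v) (pf cnt (v + 1))).filter (· ∈ Pi)).card :=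
    Finset.sum_congr rfl (fun v hv => by rw [key v hv])
  rw [h2, sum_card_slice cnt N Pi ?_, hPi_card]
  intro p hp
  simp only [hPidef, Finset.mem_filter, Finset.mem_Ico] at hp
  omega

lemma Lrow_deg (t N : ℕ) (cnt : ℕ → ℕ) (ht : 0 < t)
    (hc : ∀ v ∈ Finset.Icc 1 N, cnt v ≤ t) {v : ℕ} (hv : v ∈ Finset.Icc 1 N) :
    ((Finset.range t).filter (fun i => v ∈ Lrow t cnt N i)).card = cnt v := by
  have hv1 : 1 ≤ v := by rw [Finset.mem_Icc] at hv; omega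
  have himg : (Finset.range t).filter (fun i => v ∈ Lrow t cnt N i)
      = (Finset.Ico (pf cnt v) (pf cnt (v + 1))).image (· % t) := by
    ext i
    simp only [Finset.mem_filter, Finset.mem_range, Finset.mem_image, Finset.mem_Ico]
    rw [Lrow, Finset.mem_filter]
    simp only [Finset.mem_filter, Finset.mem_Ico, Finset.Nonempty]
    constructor
    · rintro ⟨hit, hmem⟩
      obtain ⟨p, hp⟩ := hmem.2
      exact ⟨p, hp.1, hp.2⟩
    · rintro ⟨p, hp, rfl⟩
      exact ⟨Nat.mod_lt p ht, hv, ⟨p, hp, rfl⟩⟩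
  rw [himg, Finset.card_image_of_injOn, Nat.card_Ico, pf_succ cnt v hv1]
  · omega
  · intro p hp q hq hpq
    rw [Finset.coe_Ico, Set.mem_Ico] at hp hq
    have hlen : pf cnt (v + 1) ≤ pf cnt v + t := by
      rw [pf_succ cnt v hv1]
      have := hc v hv
      omega
    rcases le_total p q with hle | hle
    · exact mod_eq_of_close ht hle (by omega) hpq
    · exact (mod_eq_of_close ht hle (by omega) hpq.symm).symm


lemma pf_const (W u : ℕ) : pf (fun _ => W) u = (u - 1) * W := by
  unfold pf
  rw [Finset.sum_const, Nat.card_Icc, smul_eq_mul, Nat.add_sub_cancel]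

lemma fillLemma (w : ℕ) : ∀ (n m : ℕ) (V : ℕ → Finset ℕ),
    m ≤ n →
    (∀ i, i < m → V i ⊆ Finset.Icc 1 n) →
    (∀ i, i < m → (V i).card = w) →
    (∀ v, ((Finset.range m).filter (fun i => v ∈ V i)).card ≤ w) →
    ∃ g : ℕ → ℕ → ℕ,
      (∀ i, i < m → (Finset.Icc 1 w).image (g i) = V i) ∧
      (∀ j, 1 ≤ j → j ≤ w → ∀ i₁, i₁ < m → ∀ i₂, i₂ < m → g i₁ j = g i₂ j → i₁ = i₂) := by
  induction w with
  | zero =>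
      intro n m V hmn hsub hcard hdeg
      refine ⟨fun _ _ => 0, ?_, ?_⟩
      · intro i hi
        have h0 : V i = ∅ := Finset.card_eq_zero.mp (hcard i hi)
        have h1 : Finset.Icc 1 0 = (∅ : Finset ℕ) := by
          ext x; simp [Finset.mem_Icc]
        rw [h0, h1, Finset.image_empty]
      · intro j hj1 hj0
        omega
  | succ w ih =>
      intro n m V hmn hsub hcard hdeg
      classical
      set W := w + 1 with hWdef
      set deg : ℕ → ℕ := fun v => ((Finset.range m).filter (fun i => v ∈ V i)).card with hdegdef
      set δ : ℕ → ℕ := fun v => W - deg v with hδdef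
      have hdegle : ∀ v, deg v ≤ W := hdeg
      have hVfilter : ∀ i, i < m → (Finset.Icc 1 n).filter (· ∈ V i) = V i := by
        intro i hi
        apply Finset.Subset.antisymm
        · intro v hv; exact (Finset.mem_filter.mp hv).2
        · intro v hv; exact Finset.mem_filter.mpr ⟨hsub i hi hv, hv⟩
      have hdegsum : ∑ v ∈ Finset.Icc 1 n, deg v = m * W := by
        have h1 : ∀ v, deg v = ∑ i ∈ Finset.range m, if v ∈ V i then 1 else 0 :=
          fun v => Finset.card_filter _ _
        calc ∑ v ∈ Finset.Icc 1 n, deg v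
            = ∑ v ∈ Finset.Icc 1 n, ∑ i ∈ Finset.range m, (if v ∈ V i then 1 else 0) :=
              Finset.sum_congr rfl (fun v _ => h1 v)
          _ = ∑ i ∈ Finset.range m, ∑ v ∈ Finset.Icc 1 n, (if v ∈ V i then 1 else 0) :=
              Finset.sum_comm
          _ = ∑ i ∈ Finset.range m, (V i).card := by
              apply Finset.sum_congr rfl
              intro i hi
              rw [Finset.mem_range] at hi
              rw [← Finset.card_filter]
              exact congrArg Finset.card (hVfilter i hi)
          _ = m * W := by
              rw [Finset.sum_congr rfl (fun i hi => hcard i (Finset.mem_range.mp hi)),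
                Finset.sum_const, Finset.card_range, smul_eq_mul]
      have hδsum : pf δ (n + 1) = (n - m) * W := by
        unfold pf; rw [Nat.add_sub_cancel]
        have h1 : ∀ v ∈ Finset.Icc 1 n, δ v + deg v = W := by
          intro v _; have := hdegle v; simp only [hδdef]; omega
        have h2 : ∑ v ∈ Finset.Icc 1 n, (δ v + deg v) = n * W := by
          rw [Finset.sum_congr rfl h1, Finset.sum_const, Nat.card_Icc, smul_eq_mul,
            Nat.add_sub_cancel]
        rw [Finset.sum_add_distrib, hdegsum] at h2
        have h3 := Nat.sub_mul n m W
        omega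
      set Sl : ℕ → Finset ℕ := fun q => Finset.Ico (q * W) ((q + 1) * W) with hSl
      set Dummy : ℕ → Finset ℕ := fun q => (Finset.Icc 1 n).filter
          (fun v => ((Finset.Ico (pf δ v) (pf δ (v + 1))).filter (· ∈ Sl q)).Nonempty) with hDummy
      set T : ℕ → Finset ℕ := fun i =>
        if i < m then V i else if i < n then Dummy (i - m) else {n + 1 + i} with hT
      have hTsub : ∀ i, i < n → T i ⊆ Finset.Icc 1 n := by
        intro i hi
        simp only [hT]
        split_ifs with h1 h2
        · exact hsub i h1
        · exact Finset.filter_subset _ _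
      set mult : ℕ → ℕ → ℕ := fun i v => if i < m then (if v ∈ V i then 1 else 0)
          else ((Finset.Ico (pf δ v) (pf δ (v + 1))).filter (· ∈ Sl (i - m))).card with hmult
      have hmultpos : ∀ i v, i < n → v ∈ Finset.Icc 1 n → 0 < mult i v → v ∈ T i := by
        intro i v hin hvIcc hpos
        simp only [hmult] at hpos
        simp only [hT]
        split_ifs at hpos ⊢ with h1 h2
        · exact h2
        · omega
        · rw [Finset.card_pos] at hpos
          simp only [hDummy, Finset.mem_filter]
          exact ⟨hvIcc, hpos⟩
      have hrow : ∀ i, i < n → ∑ v ∈ Finset.Icc 1 n, mult i v = W := by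
        intro i hi
        by_cases him : i < m
        · simp only [hmult, if_pos him]
          rw [← Finset.card_filter, hVfilter i him]
          exact hcard i him
        · simp only [hmult, if_neg him]
          have hSlsub : ∀ p ∈ Sl (i - m), p < pf δ (n + 1) := by
            intro p hp
            simp only [hSl, Finset.mem_Ico] at hp
            have h2 : (i - m + 1) * W ≤ (n - m) * W := Nat.mul_le_mul_right W (by omega)
            rw [hδsum]; omega
          rw [sum_card_slice δ n (Sl (i - m)) hSlsub]
          simp only [hSl]
          rw [Nat.card_Ico]
          have : (i - m + 1) * W = (i - m) * W + W := by ring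
          omega
      have hcol : ∀ v, v ∈ Finset.Icc 1 n → ∑ i ∈ Finset.range n, mult i v = W := by
        intro v hv
        have hv1 : 1 ≤ v ∧ v ≤ n := Finset.mem_Icc.mp hv
        have hsplit : Finset.range n = Finset.range m ∪ Finset.Ico m n := by
          rw [Finset.range_eq_Ico, Finset.range_eq_Ico,
            Finset.Ico_union_Ico_eq_Ico (Nat.zero_le m) hmn]
        have hdisj : Disjoint (Finset.range m) (Finset.Ico m n) := by
          rw [Finset.disjoint_left]
          intro i h1 h2
          rw [Finset.mem_range] at h1
          rw [Finset.mem_Ico] at h2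
          omega
        rw [hsplit, Finset.sum_union hdisj]
        have hpart1 : ∑ i ∈ Finset.range m, mult i v = deg v := by
          have : ∀ i ∈ Finset.range m, mult i v = if v ∈ V i then 1 else 0 := by
            intro i hi
            simp only [hmult, if_pos (Finset.mem_range.mp hi)]
          rw [Finset.sum_congr rfl this, ← Finset.card_filter]
        have hpart2 : ∑ i ∈ Finset.Ico m n, mult i v = δ v := by
          have h1 : ∀ i ∈ Finset.Ico m n, mult i v
              = ((Finset.Ico (pf δ v) (pf δ (v + 1))).filter (· ∈ Sl (i - m))).card := by
            intro i hi
            rw [Finset.mem_Ico] at hi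
            simp only [hmult, if_neg (by omega : ¬ i < m)]
          rw [Finset.sum_congr rfl h1]
          have hIsub : ∀ p ∈ Finset.Ico (pf δ v) (pf δ (v + 1)),
              p < pf (fun _ => W) (n - m + 1) := by
            intro p hp
            rw [Finset.mem_Ico] at hp
            have h2 : pf δ (v + 1) ≤ pf δ (n + 1) := pf_mono δ (by omega)
            rw [pf_const, Nat.add_sub_cancel]
            rw [hδsum] at h2
            omega
          have hslice := sum_card_slice (fun _ => W) (n - m)
            (Finset.Ico (pf δ v) (pf δ (v + 1))) hIsub
          have hfinal : ∑ i ∈ Finset.Ico m n,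
              ((Finset.Ico (pf δ v) (pf δ (v + 1))).filter (· ∈ Sl (i - m))).card
              = ∑ u ∈ Finset.Icc 1 (n - m),
              ((Finset.Ico (pf (fun _ => W) u) (pf (fun _ => W) (u + 1))).filter
                 (· ∈ Finset.Ico (pf δ v) (pf δ (v + 1)))).card := by
            apply Finset.sum_nbij' (fun i => i - m + 1) (fun u => m + u - 1)
            · intro i hi; rw [Finset.mem_Ico] at hi; rw [Finset.mem_Icc]; omega
            · intro u hu; rw [Finset.mem_Icc] at hu; rw [Finset.mem_Ico]; omega
            · intro i hi; rw [Finset.mem_Ico] at hi; omega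
            · intro u hu; rw [Finset.mem_Icc] at hu; omega
            · intro i hi
              rw [Finset.mem_Ico] at hi
              rw [Finset.filter_mem_eq_inter, Finset.filter_mem_eq_inter, Finset.inter_comm]
              congr 1
              rw [pf_const, pf_const, Nat.add_sub_cancel, Nat.add_sub_cancel]
          rw [hfinal, hslice, Nat.card_Ico, pf_succ δ v (by omega)]
          omega
        rw [hpart1, hpart2]
        simp only [hδdef]
        have := hdegle v
        omega
      -- Hall condition
      have hallCond : ∀ s : Finset ℕ, s.card ≤ (s.biUnion T).card := by
        intro s
        set s₁ := s.filter (· < n) with hs₁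
        set s₂ := s.filter (fun i => ¬ i < n) with hs₂
        have hjinj : Function.Injective (fun i : ℕ => n + 1 + i) := by
          intro a b hab; dsimp only at hab; omega
        have hcard2 : s₂.card = (s₂.image (fun i => n + 1 + i)).card :=
          (Finset.card_image_of_injective _ hjinj).symm
        have hsub1n : s₁ ⊆ Finset.range n := by
          intro i hi
          rw [hs₁, Finset.mem_filter] at hi
          rw [Finset.mem_range]
          exact hi.2
        have hstep : W * s₁.card ≤ W * (s₁.biUnion T).card := by
          calc W * s₁.card = ∑ i ∈ s₁, W := by rw [Finset.sum_const, smul_eq_mul, mul_comm]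
            _ = ∑ i ∈ s₁, ∑ v ∈ Finset.Icc 1 n, mult i v := by
                apply Finset.sum_congr rfl
                intro i hi
                rw [hs₁, Finset.mem_filter] at hi
                exact (hrow i hi.2).symm
            _ = ∑ v ∈ Finset.Icc 1 n, ∑ i ∈ s₁, mult i v := Finset.sum_comm
            _ ≤ ∑ v ∈ Finset.Icc 1 n, (if v ∈ s₁.biUnion T then W else 0) := by
                apply Finset.sum_le_sum
                intro v hv
                by_cases hvN : v ∈ s₁.biUnion T
                · rw [if_pos hvN]
                  calc ∑ i ∈ s₁, mult i v ≤ ∑ i ∈ Finset.range n, mult i v :=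
                        Finset.sum_le_sum_of_subset hsub1n
                    _ = W := hcol v hv
                · rw [if_neg hvN]
                  have : ∀ i ∈ s₁, mult i v = 0 := by
                    intro i hi
                    by_contra hc
                    have hipos : 0 < mult i v := Nat.pos_of_ne_zero hc
                    have hin : i < n := by
                      rw [hs₁, Finset.mem_filter] at hi; exact hi.2
                    have := hmultpos i v hin hv hipos
                    exact hvN (Finset.mem_biUnion.mpr ⟨i, hi, this⟩)
                  rw [Finset.sum_congr rfl this]
                  simp
            _ = ∑ v ∈ Finset.Icc 1 n ∩ s₁.biUnion T, W := Finset.sum_ite_mem _ _ _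
            _ ≤ W * (s₁.biUnion T).card := by
                rw [Finset.sum_const, smul_eq_mul, mul_comm]
                apply Nat.mul_le_mul_left
                exact Finset.card_le_card Finset.inter_subset_right
        have hW0 : 0 < W := by omega
        have hstep2 : s₁.card ≤ (s₁.biUnion T).card := Nat.le_of_mul_le_mul_left hstep hW0
        have hunion : s₁.biUnion T ∪ s₂.image (fun i => n + 1 + i) ⊆ s.biUnion T := by
          apply Finset.union_subset
          · exact Finset.biUnion_subset_biUnion_of_subset_left T (Finset.filter_subset _ _)
          · intro x hx
            rw [Finset.mem_image] at hx
            obtain ⟨i, hi, rfl⟩ := hx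
            rw [hs₂, Finset.mem_filter] at hi
            apply Finset.mem_biUnion.mpr
            refine ⟨i, hi.1, ?_⟩
            simp only [hT, if_neg (by omega : ¬ i < m), if_neg hi.2]
            exact Finset.mem_singleton_self _
        have hdisj2 : Disjoint (s₁.biUnion T) (s₂.image (fun i => n + 1 + i)) := by
          rw [Finset.disjoint_left]
          intro x hx1 hx2
          rw [Finset.mem_biUnion] at hx1
          obtain ⟨i, hi, hxi⟩ := hx1
          rw [hs₁, Finset.mem_filter] at hi
          have hxIcc := hTsub i hi.2 hxi
          rw [Finset.mem_Icc] at hxIcc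
          rw [Finset.mem_image] at hx2
          obtain ⟨i', hi', rfl⟩ := hx2
          omega
        have hcards : s.card = s₁.card + s₂.card :=
          (Finset.card_filter_add_card_filter_not _).symm
        calc s.card = s₁.card + s₂.card := hcards
          _ ≤ (s₁.biUnion T).card + (s₂.image (fun i => n + 1 + i)).card := by
              rw [← hcard2]; omega
          _ = (s₁.biUnion T ∪ s₂.image (fun i => n + 1 + i)).card :=
              (Finset.card_union_of_disjoint hdisj2).symm
          _ ≤ (s.biUnion T).card := Finset.card_le_card hunion
      obtain ⟨f, hfinj, hfmem⟩ := (Finset.all_card_le_biUnion_card_iff_exists_injective T).mp hallCond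
      have hfV : ∀ i, i < m → f i ∈ V i := by
        intro i hi
        have := hfmem i
        simp only [hT, if_pos hi] at this
        exact this
      have himage : (Finset.range n).image f = Finset.Icc 1 n := by
        have h1 : (Finset.range n).image f ⊆ Finset.Icc 1 n := by
          rw [Finset.image_subset_iff]
          intro i hi
          exact hTsub i (Finset.mem_range.mp hi) (hfmem i)
        apply Finset.eq_of_subset_of_card_le h1
        rw [Finset.card_image_of_injective _ hfinj, Finset.card_range, Nat.card_Icc]
        omega
      set V' : ℕ → Finset ℕ := fun i => (V i).erase (f i) with hV'
      have hcard' : ∀ i, i < m → (V' i).card = w := by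
        intro i hi
        simp only [hV']
        rw [Finset.card_erase_of_mem (hfV i hi), hcard i hi]
        omega
      have hsub' : ∀ i, i < m → V' i ⊆ Finset.Icc 1 n := by
        intro i hi
        exact (Finset.erase_subset _ _).trans (hsub i hi)
      have hdeg' : ∀ v, ((Finset.range m).filter (fun i => v ∈ V' i)).card ≤ w := by
        intro v
        have hsubf : (Finset.range m).filter (fun i => v ∈ V' i)
            ⊆ (Finset.range m).filter (fun i => v ∈ V i) := by
          intro i hi
          rw [Finset.mem_filter] at hi ⊢
          exact ⟨hi.1, Finset.mem_of_mem_erase hi.2⟩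
        by_cases hfull : deg v = W
        · have hdpos : 0 < deg v := by omega
          rw [hdegdef, Finset.card_pos] at hdpos
          obtain ⟨i₀', hi₀'⟩ := hdpos
          rw [Finset.mem_filter, Finset.mem_range] at hi₀'
          have hvIcc : v ∈ Finset.Icc 1 n := hsub i₀' hi₀'.1 hi₀'.2
          have hδ0 : δ v = 0 := by simp only [hδdef]; omega
          have hIempty : pf δ (v + 1) = pf δ v := by
            rw [pf_succ δ v (by rw [Finset.mem_Icc] at hvIcc; omega), hδ0]
            omega
          have hnotdummy : ∀ q, v ∉ Dummy q := by
            intro q hq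
            simp only [hDummy, Finset.mem_filter] at hq
            obtain ⟨p, hp⟩ := hq.2
            rw [Finset.mem_filter, Finset.mem_Ico] at hp
            omega
          have hvimg : v ∈ (Finset.range n).image f := himage ▸ hvIcc
          obtain ⟨i₀, hi₀n, hfi₀⟩ := Finset.mem_image.mp hvimg
          rw [Finset.mem_range] at hi₀n
          have hi₀m : i₀ < m := by
            by_contra hc
            have := hfmem i₀
            simp only [hT, if_neg hc, if_pos hi₀n] at this
            rw [hfi₀] at this
            exact hnotdummy _ this
          have hss : (Finset.range m).filter (fun i => v ∈ V' i)
              ⊂ (Finset.range m).filter (fun i => v ∈ V i) := by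
            rw [Finset.ssubset_iff_of_subset hsubf]
            refine ⟨i₀, ?_, ?_⟩
            · rw [Finset.mem_filter, Finset.mem_range]
              exact ⟨hi₀m, hfi₀ ▸ hfV i₀ hi₀m⟩
            · rw [Finset.mem_filter]
              rintro ⟨-, hmem⟩
              simp only [hV'] at hmem
              rw [← hfi₀] at hmem
              exact Finset.notMem_erase _ _ hmem
          have h5 := Finset.card_lt_card hss
          have h6 : ((Finset.range m).filter (fun i => v ∈ V i)).card = deg v := rfl
          omega
        · have h7 : deg v ≤ w := by have := hdegle v; omega
          calc ((Finset.range m).filter (fun i => v ∈ V' i)).card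
              ≤ ((Finset.range m).filter (fun i => v ∈ V i)).card := Finset.card_le_card hsubf
            _ = deg v := rfl
            _ ≤ w := h7
      obtain ⟨g', hg'img, hg'col⟩ := ih n m V' hmn hsub' hcard' hdeg'
      set g : ℕ → ℕ → ℕ := fun i j => if j = W then f i else g' i j with hg
      refine ⟨g, ?_, ?_⟩
      · intro i hi
        have hIcc : Finset.Icc 1 W = insert W (Finset.Icc 1 w) := by
          ext x
          simp only [Finset.mem_Icc, Finset.mem_insert]
          omega
        rw [hIcc, Finset.image_insert]
        have h1 : g i W = f i := by simp [hg]
        have himgcong : (Finset.Icc 1 w).image (g i)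
            = (Finset.Icc 1 w).image (g' i) := by
          apply Finset.image_congr
          intro j hj
          rw [Finset.mem_coe, Finset.mem_Icc] at hj
          simp only [hg]
          rw [if_neg (by omega)]
        rw [h1, himgcong, hg'img i hi]
        exact Finset.insert_erase (hfV i hi)
      · intro j hj1 hjW i₁ hi₁ i₂ hi₂ heq
        simp only [hg] at heq
        split_ifs at heq with hjw
        · exact hfinj heq
        · exact hg'col j hj1 (by omega) i₁ hi₁ i₂ hi₂ heq

lemma map_Icc_two (t : ℕ) (c1 c2 : ℕ) (l : ℕ → ℕ) :
    ∀ (s : ℕ), (∀ i, 1 ≤ i → i ≤ t → l i = c2) → (∀ i, t < i → i ≤ t + s → l i = c1) →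
    (Finset.Icc 1 (t + s)).val.map l = Multiset.replicate s c1 + Multiset.replicate t c2 := by
  intro s
  induction s with
  | zero =>
      intro h2 h1
      rw [Multiset.replicate_zero, zero_add]
      rw [Multiset.eq_replicate]
      constructor
      · rw [Multiset.card_map, ← Finset.card_def, Nat.card_Icc]
        omega
      · intro b hb
        rw [Multiset.mem_map] at hb
        obtain ⟨i, hi, rfl⟩ := hb
        rw [Finset.mem_val, Finset.mem_Icc] at hi
        exact h2 i hi.1 (by omega)
  | succ s ihs =>
      intro h2 h1
      have hIcc : Finset.Icc 1 (t + (s + 1)) = insert (t + s + 1) (Finset.Icc 1 (t + s)) := by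
        ext x
        simp only [Finset.mem_Icc, Finset.mem_insert]
        omega
      rw [hIcc, Finset.insert_val_of_notMem (by rw [Finset.mem_Icc]; omega),
        Multiset.map_cons, h1 (t + s + 1) (by omega) (by omega),
        ihs h2 (fun i ha hb => h1 i ha (by omega)),
        Multiset.replicate_succ, Multiset.cons_add]

lemma topSum_exists (S : Multiset ℕ) (w : ℕ) :
    ∃ M : Multiset ℕ, M ≤ S ∧ Multiset.card M ≤ w ∧ topSum S w = M.sum := by
  classical
  refine ⟨(((Multiset.sort S (· ≤ ·)).reverse.take w : List ℕ) : Multiset ℕ), ?_, ?_, ?_⟩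
  · have h1 := (List.take_sublist w (Multiset.sort S (· ≤ ·)).reverse).subperm
    calc ((((Multiset.sort S (· ≤ ·)).reverse.take w : List ℕ)) : Multiset ℕ)
        ≤ ↑((Multiset.sort S (· ≤ ·)).reverse) := Multiset.coe_le.mpr h1
      _ = S := by rw [Multiset.coe_reverse, Multiset.sort_eq]
  · rw [Multiset.coe_card, List.length_take]
    omega
  · unfold topSum
    rw [Multiset.sum_coe]

lemma colSum_full (S : Multiset ℕ) (w : ℕ) (hall : ∀ x ∈ S, w ≤ x) :
    colSum S w = w * Multiset.card S := by
  unfold colSum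
  have h1 : ∀ c ∈ Finset.Icc 1 w, (Multiset.filter (fun r => c ≤ r) S).card = Multiset.card S := by
    intro c hc
    rw [Finset.mem_Icc] at hc
    congr 1
    rw [Multiset.filter_eq_self]
    intro x hx
    exact le_trans hc.2 (hall x hx)
  rw [Finset.sum_congr rfl h1, Finset.sum_const, Nat.card_Icc, smul_eq_mul, Nat.add_sub_cancel]

end WideTwoAux

/-- a wide Young diagram with two distinct row lengths is Latin. -/
theorem wide_implies_latin_two (a e : ℕ → ℕ)
    (ha1 : 0 < a 1) (ha12 : a 1 < a 2)
    (he : ∀ i, 1 ≤ i → i ≤ 2 → 0 < e i)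
    (hw : Wide (rowMultiset 2 a e)) :
    IsLatin (rowMultiset 2 a e) := by
  classical
  have hs : 0 < e 1 := he 1 le_rfl (by omega)
  have ht : 0 < e 2 := he 2 (by omega) le_rfl
  set k := a 1 with hkdef
  set n := a 2 with hndef
  set s := e 1 with hsdef
  set t := e 2 with htdef
  set d := n - k with hddef
  have hnkd : n = k + d := by omega
  have hd1 : 1 ≤ d := by omega
  have hR : rowMultiset 2 a e = Multiset.replicate s k + Multiset.replicate t n := by
    unfold rowMultiset
    have h2 : Finset.Icc 1 2 = {1, 2} := rfl
    rw [h2, Finset.sum_insert (by decide), Finset.sum_singleton]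
  have hmem_le : ∀ x ∈ Multiset.replicate s k + Multiset.replicate t n, x = k ∨ x = n := by
    intro x hx
    rw [Multiset.mem_add] at hx
    rcases hx with hx | hx
    · exact Or.inl (Multiset.eq_of_mem_replicate hx)
    · exact Or.inr (Multiset.eq_of_mem_replicate hx)
  have cardR : Multiset.card (Multiset.replicate s k + Multiset.replicate t n) = s + t := by
    rw [Multiset.card_add, Multiset.card_replicate, Multiset.card_replicate]
  -- Fact 1 : s ≤ k
  have fact1 : s ≤ k := by
    have hle : Multiset.replicate s k ≤ rowMultiset 2 a e := by
      rw [hR]; exact Multiset.le_add_right _ _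
    have h := hw _ hle 1 one_pos
    have hcol1 : colSum (Multiset.replicate s k) 1 = 1 * s := by
      rw [WideTwoAux.colSum_full _ 1 (by
        intro x hx
        rw [Multiset.eq_of_mem_replicate hx]
        omega), Multiset.card_replicate]
    obtain ⟨M, hM1, hM2, hM3⟩ := WideTwoAux.topSum_exists (Multiset.replicate s k) 1
    have hsum : M.sum ≤ Multiset.card M * k := by
      have := Multiset.sum_le_card_nsmul M k (by
        intro x hx
        have hxx := Multiset.mem_of_le hM1 hx
        rw [Multiset.eq_of_mem_replicate hxx])
      rw [smul_eq_mul] at this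
      exact this
    have hck : Multiset.card M * k ≤ 1 * k := Nat.mul_le_mul_right k hM2
    rw [hcol1, hM3] at h
    omega
  -- Fact 2 : s + t ≤ n
  have fact2 : s + t ≤ n := by
    have h := hw _ (le_refl (rowMultiset 2 a e)) 1 one_pos
    have hcol1 : colSum (rowMultiset 2 a e) 1 = 1 * (s + t) := by
      rw [hR, WideTwoAux.colSum_full _ 1 (by
        intro x hx
        rcases hmem_le x hx with h' | h' <;> omega), cardR]
    obtain ⟨M, hM1, hM2, hM3⟩ := WideTwoAux.topSum_exists (rowMultiset 2 a e) 1
    rw [hR] at hM1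
    have hsum : M.sum ≤ Multiset.card M * n := by
      have := Multiset.sum_le_card_nsmul M n (by
        intro x hx
        have hxx := Multiset.mem_of_le hM1 hx
        rcases hmem_le x hxx with h' | h' <;> omega)
      rw [smul_eq_mul] at this
      exact this
    have hck : Multiset.card M * n ≤ 1 * n := Nat.mul_le_mul_right n hM2
    rw [hcol1, hM3] at h
    omega
  -- Fact 3 : k * (s + t - k) ≤ t * d
  have fact3 : k * ((s + t) - k) ≤ t * d := by
    rcases le_or_gt (s + t) k with hcase | hcase
    · rw [Nat.sub_eq_zero_of_le hcase, Nat.mul_zero]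
      exact Nat.zero_le _
    rcases le_or_gt k t with hcase2 | hcase2
    · have h1 : (s + t) - k ≤ d := by omega
      calc k * ((s + t) - k) ≤ k * d := Nat.mul_le_mul_left k h1
        _ ≤ t * d := Nat.mul_le_mul_right d hcase2
    · have h := hw _ (le_refl (rowMultiset 2 a e)) k ha1
      have hcol : colSum (rowMultiset 2 a e) k = k * (s + t) := by
        rw [hR, WideTwoAux.colSum_full _ k (by
          intro x hx
          rcases hmem_le x hx with h' | h' <;> omega), cardR]
      obtain ⟨M, hM1, hM2, hM3⟩ := WideTwoAux.topSum_exists (rowMultiset 2 a e) k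
      rw [hR] at hM1
      set cn := Multiset.count n M with hcn
      have hcnt : cn ≤ t := by
        have hco := Multiset.count_le_of_le n hM1
        rw [Multiset.count_add, Multiset.count_replicate, Multiset.count_replicate,
          if_neg (by omega : ¬ k = n), if_pos rfl] at hco
        omega
      have hMsplit : M = Multiset.replicate cn n + Multiset.filter (fun x => ¬ x = n) M := by
        rw [hcn, ← Multiset.filter_eq']
        exact (Multiset.filter_add_not _ M).symm
      set M2 := Multiset.filter (fun x => ¬ x = n) M with hM2def
      have hM2repl : M2 = Multiset.replicate (Multiset.card M2) k := by
        rw [Multiset.eq_replicate]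
        refine ⟨rfl, ?_⟩
        intro b hb
        rw [hM2def, Multiset.mem_filter] at hb
        have hbR := Multiset.mem_of_le hM1 hb.1
        rcases hmem_le b hbR with h' | h'
        · exact h'
        · exact absurd h' hb.2
      have hsumM : M.sum = cn * n + (Multiset.card M2) * k := by
        conv_lhs => rw [hMsplit]
        rw [Multiset.sum_add, Multiset.sum_replicate, smul_eq_mul]
        congr 1
        conv_lhs => rw [hM2repl]
        rw [Multiset.sum_replicate, smul_eq_mul]
      have hcardM : cn + Multiset.card M2 ≤ k := by
        have hcc := congrArg Multiset.card hMsplit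
        rw [Multiset.card_add, Multiset.card_replicate] at hcc
        omega
      rw [hM3, hsumM, hcol] at h
      have e1 : cn * n = cn * k + cn * d := by
        rw [← Nat.mul_add]
        congr 1
      have e2 : cn * k + Multiset.card M2 * k ≤ k * k := by
        rw [← Nat.add_mul]
        exact Nat.mul_le_mul_right k hcardM
      have e3 : cn * d ≤ t * d := Nat.mul_le_mul_right d hcnt
      have e4 : k * (s + t) = k * ((s + t) - k) + k * k := by
        rw [← Nat.mul_add]
        congr 1
        omega
      omega
  -- the counts
  set r' := (s + t) - k with hr'
  set A := min d t with hA
  set lb : ℕ → ℕ := fun v => if v ≤ k then r' else t - k with hlb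
  have hlbA : ∀ v ∈ Finset.Icc 1 n, lb v ≤ A := by
    intro v hv
    simp only [hlb, hA]
    split_ifs
    · exact le_min (by omega) (by omega)
    · exact le_min (by omega) (by omega)
  have hlbsum : ∑ v ∈ Finset.Icc 1 n, lb v = k * r' + d * (t - k) := by
    have hsplit : Finset.Icc 1 n = Finset.Icc 1 k ∪ Finset.Icc (k + 1) n := by
      ext x
      simp only [Finset.mem_Icc, Finset.mem_union]
      omega
    have hdisj : Disjoint (Finset.Icc 1 k) (Finset.Icc (k + 1) n) := by
      rw [Finset.disjoint_left]
      intro x h1 h2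
      rw [Finset.mem_Icc] at h1 h2
      omega
    rw [hsplit, Finset.sum_union hdisj]
    congr 1
    · have h1 : ∀ v ∈ Finset.Icc 1 k, lb v = r' := by
        intro v hv
        rw [Finset.mem_Icc] at hv
        simp only [hlb]
        rw [if_pos hv.2]
      rw [Finset.sum_congr rfl h1, Finset.sum_const, Nat.card_Icc, smul_eq_mul,
        Nat.add_sub_cancel, Nat.mul_comm]
    · have h1 : ∀ v ∈ Finset.Icc (k + 1) n, lb v = t - k := by
        intro v hv
        rw [Finset.mem_Icc] at hv
        simp only [hlb]
        rw [if_neg (by omega)]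
      rw [Finset.sum_congr rfl h1, Finset.sum_const, Nat.card_Icc, smul_eq_mul]
      have : n + 1 - (k + 1) = d := by omega
      rw [this]
  have hsum_le : k * r' + d * (t - k) ≤ t * d := by
    rcases le_or_gt t k with hc | hc
    · have h0 : t - k = 0 := by omega
      rw [h0, Nat.mul_zero, Nat.add_zero]
      exact fact3
    · have h1 : k * r' ≤ k * d := Nat.mul_le_mul_left k (by omega)
      have h2 : d * k + d * (t - k) = d * t := by
        rw [← Nat.mul_add]
        congr 1
        omega
      have h3 : k * d = d * k := Nat.mul_comm k d
      have h4 : d * t = t * d := Nat.mul_comm d t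
      omega
  have hT2 : t * d ≤ n * A := by
    rcases le_or_gt d t with hc | hc
    · rw [hA, min_eq_left hc]
      exact Nat.mul_le_mul_right d (by omega)
    · rw [hA, min_eq_right (by omega)]
      calc t * d ≤ t * n := Nat.mul_le_mul_left t (by omega)
        _ = n * t := Nat.mul_comm t n
  obtain ⟨cnt, hcnt, hcntsum⟩ := WideTwoAux.exists_cnt n A (t * d) lb hlbA
    (by rw [hlbsum]; exact hsum_le) hT2
  have hcnt_t : ∀ v ∈ Finset.Icc 1 n, cnt v ≤ t :=
    fun v hv => le_trans (hcnt v hv).2 (min_le_right d t)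
  have hcnt_d : ∀ v ∈ Finset.Icc 1 n, cnt v ≤ d :=
    fun v hv => le_trans (hcnt v hv).2 (min_le_left d t)
  set L : ℕ → Finset ℕ := WideTwoAux.Lrow t cnt n with hL
  have hLA : ∀ i, i < t → (L i).card = d :=
    fun i hi => WideTwoAux.Lrow_card t d n cnt ht hcnt_t hcntsum hi
  have hLB : ∀ v ∈ Finset.Icc 1 n, ((Finset.range t).filter (fun i => v ∈ L i)).card = cnt v :=
    fun v hv => WideTwoAux.Lrow_deg t n cnt ht hcnt_t hv
  have hLsub : ∀ i, L i ⊆ Finset.Icc 1 n := fun i => WideTwoAux.Lrow_subset t cnt n i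
  -- late fill
  obtain ⟨gL, hgLimg, hgLcol⟩ := WideTwoAux.fillLemma d n t L (by omega)
    (fun i _ => hLsub i) hLA (by
      intro v
      by_cases hv : v ∈ Finset.Icc 1 n
      · rw [hLB v hv]
        exact hcnt_d v hv
      · have h0 : (Finset.range t).filter (fun i => v ∈ L i) = ∅ :=
          Finset.filter_eq_empty_iff.mpr (by
            intro i _ hvL
            exact hv (hLsub i hvL))
        rw [h0]
        simp)
  -- early sets
  set VE : ℕ → Finset ℕ := fun i => if i < t then (Finset.Icc 1 n) \ L i else Finset.Icc 1 k
    with hVE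
  have hVEcard : ∀ i, i < t + s → (VE i).card = k := by
    intro i hi
    simp only [hVE]
    split_ifs with hit
    · rw [Finset.card_sdiff_of_subset (hLsub i), hLA i hit, Nat.card_Icc]
      omega
    · rw [Nat.card_Icc]
      omega
  obtain ⟨gE, hgEimg, hgEcol⟩ := WideTwoAux.fillLemma k n (t + s) VE (by omega)
    (by
      intro i hi
      simp only [hVE]
      split_ifs
      · exact Finset.sdiff_subset
      · exact Finset.Icc_subset_Icc_right (by omega))
    hVEcard
    (by
      intro v
      have hsplitr : Finset.range (t + s) = Finset.range t ∪ Finset.Ico t (t + s) := by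
        ext x
        simp only [Finset.mem_union, Finset.mem_range, Finset.mem_Ico]
        omega
      have hdisj : Disjoint (Finset.range t) (Finset.Ico t (t + s)) := by
        rw [Finset.disjoint_left]
        intro x h1 h2
        rw [Finset.mem_range] at h1
        rw [Finset.mem_Ico] at h2
        omega
      rw [hsplitr, Finset.filter_union,
        Finset.card_union_of_disjoint (Finset.disjoint_filter_filter hdisj)]
      by_cases hv : v ∈ Finset.Icc 1 n
      · have hv' := Finset.mem_Icc.mp hv
        have hpart1 : ((Finset.range t).filter (fun i => v ∈ VE i)).card = t - cnt v := by
          have hEq : (Finset.range t).filter (fun i => v ∈ VE i)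
              = (Finset.range t).filter (fun i => ¬ v ∈ L i) := by
            apply Finset.filter_congr
            intro i hi
            rw [Finset.mem_range] at hi
            simp only [hVE, if_pos hi, Finset.mem_sdiff, eq_iff_iff]
            exact ⟨fun h' => h'.2, fun h' => ⟨hv, h'⟩⟩
          rw [hEq]
          have htot := Finset.card_filter_add_card_filter_not
            (s := Finset.range t) (p := fun i => v ∈ L i)
          rw [hLB v hv, Finset.card_range] at htot
          omega
        have hpart2 : ((Finset.Ico t (t + s)).filter (fun i => v ∈ VE i)).card
            = if v ≤ k then s else 0 := by
          split_ifs with hvk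
          · have h0 : (Finset.Ico t (t + s)).filter (fun i => v ∈ VE i)
                = Finset.Ico t (t + s) := by
              apply Finset.filter_true_of_mem
              intro i hi
              rw [Finset.mem_Ico] at hi
              simp only [hVE, if_neg (by omega : ¬ i < t)]
              rw [Finset.mem_Icc]
              exact ⟨hv'.1, hvk⟩
            rw [h0, Nat.card_Ico]
            omega
          · have h0 : (Finset.Ico t (t + s)).filter (fun i => v ∈ VE i) = ∅ := by
              apply Finset.filter_eq_empty_iff.mpr
              intro i hi
              rw [Finset.mem_Ico] at hi
              simp only [hVE, if_neg (by omega : ¬ i < t)]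
              intro hmem
              rw [Finset.mem_Icc] at hmem
              omega
            rw [h0]
            simp
        rw [hpart1, hpart2]
        have hcv := (hcnt v hv).1
        simp only [hlb] at hcv
        have hcnt_tv := hcnt_t v hv
        split_ifs at hcv ⊢ with hvk
        · omega
        · omega
      · have h1 : ((Finset.range t).filter (fun i => v ∈ VE i)) = ∅ := by
          apply Finset.filter_eq_empty_iff.mpr
          intro i _
          simp only [hVE]
          split_ifs
          · rw [Finset.mem_sdiff]
            rintro ⟨h', -⟩
            exact hv h'
          · intro h'
            exact hv (Finset.Icc_subset_Icc_right (by omega) h')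
        have h2 : ((Finset.Ico t (t + s)).filter (fun i => v ∈ VE i)) = ∅ := by
          apply Finset.filter_eq_empty_iff.mpr
          intro i _
          simp only [hVE]
          split_ifs
          · rw [Finset.mem_sdiff]
            rintro ⟨h', -⟩
            exact hv h'
          · intro h'
            exact hv (Finset.Icc_subset_Icc_right (by omega) h')
        rw [h1, h2]
        simp)
  -- assemble
  set l : ℕ → ℕ := fun i => if i ≤ t then n else k with hldef
  set ff : ℕ → ℕ → ℕ := fun i j =>
    if i ≤ t ∧ k < j then gL (i - 1) (j - k) else gE (i - 1) j with hff
  refine ⟨t + s, l, ff, ?_, ?_, ?_⟩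
  · rw [hR]
    apply WideTwoAux.map_Icc_two t k n l s
    · intro i h1 h2
      simp only [hldef]
      rw [if_pos h2]
    · intro i h1 h2
      simp only [hldef]
      rw [if_neg (by omega)]
  · intro i hi
    rw [Finset.mem_Icc] at hi
    by_cases hit : i ≤ t
    · -- long row
      have hli : l i = n := by simp only [hldef]; rw [if_pos hit]
      rw [hli]
      have hi1 : i - 1 < t := by omega
      have hi1' : i - 1 < t + s := by omega
      have hEcong : ∀ j, 1 ≤ j → j ≤ k → ff i j = gE (i - 1) j := by
        intro j h1 h2
        simp only [hff]
        rw [if_neg (by rintro ⟨-, hkj⟩; omega)]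
      have hLcong : ∀ j, k + 1 ≤ j → ff i j = gL (i - 1) (j - k) := by
        intro j h1
        simp only [hff]
        rw [if_pos ⟨hit, by omega⟩]
      have hEimg : (Finset.Icc 1 k).image (ff i) = Finset.Icc 1 n \ L (i - 1) := by
        have hcong : (Finset.Icc 1 k).image (ff i) = (Finset.Icc 1 k).image (gE (i - 1)) := by
          apply Finset.image_congr
          intro j hj
          rw [Finset.mem_coe, Finset.mem_Icc] at hj
          exact hEcong j hj.1 hj.2
        rw [hcong, hgEimg (i - 1) hi1']
        simp only [hVE]
        rw [if_pos hi1]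
      have hLimg : (Finset.Icc (k + 1) n).image (ff i) = L (i - 1) := by
        have hcong : (Finset.Icc (k + 1) n).image (ff i)
            = (Finset.Icc (k + 1) n).image (fun j => gL (i - 1) (j - k)) := by
          apply Finset.image_congr
          intro j hj
          rw [Finset.mem_coe, Finset.mem_Icc] at hj
          exact hLcong j hj.1
        rw [hcong]
        have hmapIcc : (Finset.Icc (k + 1) n).image (fun j => gL (i - 1) (j - k))
            = (Finset.Icc 1 d).image (gL (i - 1)) := by
          ext y
          simp only [Finset.mem_image, Finset.mem_Icc]
          constructor
          · rintro ⟨j, hj, rfl⟩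
            exact ⟨j - k, ⟨by omega, by omega⟩, rfl⟩
          · rintro ⟨u, hu, rfl⟩
            refine ⟨u + k, ⟨by omega, by omega⟩, ?_⟩
            congr 1
            omega
        rw [hmapIcc, hgLimg (i - 1) hi1]
      have hinjE : Set.InjOn (gE (i - 1)) ↑(Finset.Icc 1 k) := by
        apply Finset.injOn_of_card_image_eq
        rw [hgEimg (i - 1) hi1', hVEcard (i - 1) hi1', Nat.card_Icc]
        omega
      have hinjL : Set.InjOn (gL (i - 1)) ↑(Finset.Icc 1 d) := by
        apply Finset.injOn_of_card_image_eq
        rw [hgLimg (i - 1) hi1, hLA (i - 1) hi1, Nat.card_Icc]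
        omega
      have hmemE : ∀ j, 1 ≤ j → j ≤ k → ff i j ∈ Finset.Icc 1 n \ L (i - 1) := by
        intro j h1 h2
        rw [← hEimg]
        exact Finset.mem_image_of_mem _ (Finset.mem_Icc.mpr ⟨h1, h2⟩)
      have hmemL : ∀ j, k + 1 ≤ j → j ≤ n → ff i j ∈ L (i - 1) := by
        intro j h1 h2
        rw [← hLimg]
        exact Finset.mem_image_of_mem _ (Finset.mem_Icc.mpr ⟨h1, h2⟩)
      constructor
      · intro j₁ hj₁ j₂ hj₂ heq
        rw [Set.mem_Icc] at hj₁ hj₂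
        rcases le_or_gt j₁ k with hc1 | hc1 <;> rcases le_or_gt j₂ k with hc2 | hc2
        · rw [hEcong j₁ hj₁.1 hc1, hEcong j₂ hj₂.1 hc2] at heq
          exact hinjE (by rw [Finset.coe_Icc]; exact Set.mem_Icc.mpr ⟨hj₁.1, hc1⟩)
            (by rw [Finset.coe_Icc]; exact Set.mem_Icc.mpr ⟨hj₂.1, hc2⟩) heq
        · have h1 := hmemE j₁ hj₁.1 hc1
          have h2 := hmemL j₂ (by omega) hj₂.2
          rw [heq] at h1
          rw [Finset.mem_sdiff] at h1
          exact absurd h2 h1.2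
        · have h1 := hmemE j₂ hj₂.1 hc2
          have h2 := hmemL j₁ (by omega) hj₁.2
          rw [← heq] at h1
          rw [Finset.mem_sdiff] at h1
          exact absurd h2 h1.2
        · rw [hLcong j₁ (by omega), hLcong j₂ (by omega)] at heq
          have h3 : j₁ - k = j₂ - k :=
            hinjL (by rw [Finset.coe_Icc]; exact Set.mem_Icc.mpr ⟨by omega, by omega⟩)
              (by rw [Finset.coe_Icc]; exact Set.mem_Icc.mpr ⟨by omega, by omega⟩) heq
          omega
      · have hsplitn : Finset.Icc 1 n = Finset.Icc 1 k ∪ Finset.Icc (k + 1) n := by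
          ext x
          simp only [Finset.mem_Icc, Finset.mem_union]
          omega
        conv_lhs => rw [hsplitn]
        rw [Finset.image_union, hEimg, hLimg]
        exact Finset.sdiff_union_of_subset (hLsub (i - 1))
    · -- short row
      have hli : l i = k := by simp only [hldef]; rw [if_neg hit]
      rw [hli]
      have him : i - 1 < t + s := by omega
      have hVEi : VE (i - 1) = Finset.Icc 1 k := by
        simp only [hVE]
        rw [if_neg (by omega)]
      have hcongS : ∀ j, ff i j = gE (i - 1) j := by
        intro j
        simp only [hff]
        rw [if_neg (by rintro ⟨h', -⟩; exact hit h')]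
      have hinjS : Set.InjOn (gE (i - 1)) ↑(Finset.Icc 1 k) := by
        apply Finset.injOn_of_card_image_eq
        rw [hgEimg (i - 1) him, hVEcard (i - 1) him, Nat.card_Icc]
        omega
      constructor
      · intro j₁ hj₁ j₂ hj₂ heq
        rw [Set.mem_Icc] at hj₁ hj₂
        rw [hcongS j₁, hcongS j₂] at heq
        exact hinjS (by rw [Finset.coe_Icc]; exact Set.mem_Icc.mpr hj₁)
          (by rw [Finset.coe_Icc]; exact Set.mem_Icc.mpr hj₂) heq
      · have hcong : (Finset.Icc 1 k).image (ff i) = (Finset.Icc 1 k).image (gE (i - 1)) :=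
          Finset.image_congr (fun j _ => hcongS j)
        rw [hcong, hgEimg (i - 1) him, hVEi]
  · intro j hj1 i₁ hi₁ i₂ hi₂ hl₁ hl₂ heq
    rw [Finset.mem_Icc] at hi₁ hi₂
    by_cases hjk : j ≤ k
    · have e₁ : ff i₁ j = gE (i₁ - 1) j := by
        simp only [hff]
        rw [if_neg (by rintro ⟨-, h'⟩; omega)]
      have e₂ : ff i₂ j = gE (i₂ - 1) j := by
        simp only [hff]
        rw [if_neg (by rintro ⟨-, h'⟩; omega)]
      rw [e₁, e₂] at heq
      have := hgEcol j hj1 hjk (i₁ - 1) (by omega) (i₂ - 1) (by omega) heq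
      omega
    · have h₁t : i₁ ≤ t := by
        by_contra hc
        have h0 : l i₁ = k := by simp only [hldef]; rw [if_neg hc]
        omega
      have h₂t : i₂ ≤ t := by
        by_contra hc
        have h0 : l i₂ = k := by simp only [hldef]; rw [if_neg hc]
        omega
      have hln₁ : l i₁ = n := by simp only [hldef]; rw [if_pos h₁t]
      have hln₂ : l i₂ = n := by simp only [hldef]; rw [if_pos h₂t]
      have e₁ : ff i₁ j = gL (i₁ - 1) (j - k) := by
        simp only [hff]
        rw [if_pos ⟨h₁t, by omega⟩]
      have e₂ : ff i₂ j = gL (i₂ - 1) (j - k) := by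
        simp only [hff]
        rw [if_pos ⟨h₂t, by omega⟩]
      rw [e₁, e₂] at heq
      have := hgLcol (j - k) (by omega) (by omega) (i₁ - 1) (by omega) (i₂ - 1) (by omega) heq
      omega
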